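/- On a probability space, let f : ℝ^d → ℝ be twice continuously differentiable with μ·I ⪯ ∇²f(w) ⪯ L·I for all w (0 < μ ≤ L) and unique minimizer w*. Let (w_k), (g_k) be ℝ^d-valued random sequences and (H̃_k) random symmetric matrices with μ̃·I ⪯ H̃_k ⪯ L̃·I almost surely (0 < μ̃, L ≤ L̃ < ∞), satisfying w_{k+1} = w_k − α H̃_k⁻¹ g_k with constant deterministic step size 0 < α ≤ μ̃/L, w₀ deterministic, and suppose each g_k satisfies the stochastic norm condition E[ ‖g_k − ∇f(w_k)‖²_{H̃_k⁻¹} | w_k, H̃_k ] ≤ θ̃_g² ‖∇f(w_k)‖²_{H̃_k⁻¹} + ι_k with θ̃_g ∈ [0,1) and ι_k = ι₀ a_g^k (ι₀ > 0, a_g ∈ [0,1)). Then for all k ≥ 0: E[f(w_k) − f(w*)] ≤ C̃₁ ρ̃₁^k, where C̃₁ = max{ f(w₀) − f(w*), L̃ ι₀/(μ(1 − θ̃_g²)) } and ρ̃₁ = max{ 1 − αμ(1 − θ̃_g²)/(2L̃), a_g }. -/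

import Mathlib

open Finset Matrix MeasureTheory
open scoped RealInnerProductSpace

noncomputable section

abbrev Vec (d : ℕ) := EuclideanSpace ℝ (Fin d)

/-- The continuous linear operator on Euclidean space associated with a matrix. -/
noncomputable def toOp {d : ℕ} (A : Matrix (Fin d) (Fin d) ℝ) : Vec d →L[ℝ] Vec d :=
  LinearMap.toContinuousLinearMap (Matrix.toEuclideanLin A)

namespace Aux

theorem taylor_ub {d : ℕ} (f : Vec d → ℝ) (gradf : Vec d → Vec d)
    (Hf : Vec d → (Vec d →L[ℝ] Vec d))
    (hgrad : ∀ x, HasGradientAt f (gradf x) x)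
    (hHf : ∀ x, HasFDerivAt gradf (Hf x) x)
    (c : ℝ) (hc : ∀ z v, ⟪Hf z v, v⟫ ≤ c * ‖v‖ ^ 2)
    (x y : Vec d) : f y ≤ f x + ⟪gradf x, y - x⟫ + c / 2 * ‖y - x‖ ^ 2 := by
  set v := y - x with hv
  have hγ : ∀ t : ℝ, HasDerivAt (fun t : ℝ => x + t • v) v t := by
    intro t
    simpa using ((hasDerivAt_id t).smul_const v).const_add x
  have hφ : ∀ t : ℝ, HasDerivAt (fun t => f (x + t • v)) ⟪gradf (x + t • v), v⟫ t := by
    intro t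
    have := ((hgrad (x + t • v)).hasFDerivAt).comp_hasDerivAt t (hγ t)
    simpa [Function.comp_def] using this
  have hψ : ∀ t : ℝ, HasDerivAt (fun t => ⟪gradf (x + t • v), v⟫)
      ⟪Hf (x + t • v) v, v⟫ t := by
    intro t
    have h1 : HasDerivAt (fun t : ℝ => gradf (x + t • v)) (Hf (x + t • v) v) t :=
      (hHf (x + t • v)).comp_hasDerivAt t (hγ t)
    have := h1.inner ℝ (hasDerivAt_const t v)
    simpa using this
  -- step 1 : ψ t - ψ 0 ≤ c * ‖v‖^2 * t for t ≥ 0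
  have step1 : ∀ t : ℝ, 0 ≤ t →
      ⟪gradf (x + t • v), v⟫ - ⟪gradf x, v⟫ ≤ c * ‖v‖ ^ 2 * t := by
    have hmono : Monotone (fun t : ℝ => c * ‖v‖ ^ 2 * t - ⟪gradf (x + t • v), v⟫) := by
      have hd : ∀ t : ℝ, HasDerivAt (fun t : ℝ => c * ‖v‖ ^ 2 * t - ⟪gradf (x + t • v), v⟫)
          (c * ‖v‖ ^ 2 - ⟪Hf (x + t • v) v, v⟫) t := by
        intro t
        simpa [Pi.sub_def] using ((hasDerivAt_id t).const_mul (c * ‖v‖ ^ 2)).sub (hψ t)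
      apply monotone_of_deriv_nonneg
      · exact fun t => (hd t).differentiableAt
      · intro t
        rw [(hd t).deriv]
        have := hc (x + t • v) v
        linarith
    intro t ht
    have h0 := hmono ht
    simp only [zero_smul, add_zero, mul_zero, zero_sub] at h0
    linarith
  -- step 2 : χ antitone on [0, ∞)
  have hχd : ∀ t : ℝ, HasDerivAt
      (fun t : ℝ => f (x + t • v) - t * ⟪gradf x, v⟫ - c * ‖v‖ ^ 2 * (t ^ 2 / 2))
      (⟪gradf (x + t • v), v⟫ - ⟪gradf x, v⟫ - c * ‖v‖ ^ 2 * t) t := by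
    intro t
    have h2 : HasDerivAt (fun t : ℝ => t ^ 2 / 2) t t := by
      simpa using ((hasDerivAt_pow 2 t).div_const 2)
    have := ((hφ t).sub ((hasDerivAt_id t).mul_const ⟪gradf x, v⟫)).sub
      (h2.const_mul (c * ‖v‖ ^ 2))
    simpa [Pi.sub_def] using this
  have hanti : AntitoneOn
      (fun t : ℝ => f (x + t • v) - t * ⟪gradf x, v⟫ - c * ‖v‖ ^ 2 * (t ^ 2 / 2))
      (Set.Ici (0 : ℝ)) := by
    apply antitoneOn_of_deriv_nonpos (convex_Ici 0)
    · exact (Differentiable.continuous fun t => (hχd t).differentiableAt).continuousOn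
    · exact fun t _ => (hχd t).differentiableAt.differentiableWithinAt
    · intro t ht
      rw [(hχd t).deriv]
      have := step1 t (le_of_lt (by simpa using ht))
      linarith
  have h01 := hanti (Set.self_mem_Ici) (by simp : (1:ℝ) ∈ Set.Ici (0:ℝ)) zero_le_one
  simp only [zero_smul, add_zero, one_smul, zero_mul, mul_zero, zero_pow, zero_div, sub_zero,
    one_mul, one_pow] at h01
  have hxy : x + v = y := by simp [hv]
  rw [hxy] at h01
  linarith



variable {d : ℕ}

lemma toOp_mul (M N : Matrix (Fin d) (Fin d) ℝ) (x : Vec d) :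
    toOp (M * N) x = toOp M (toOp N x) := by
  simp [toOp, Matrix.toEuclideanLin_apply, Matrix.mulVec_mulVec]

lemma toOp_one (x : Vec d) : toOp 1 x = x := by
  simp [toOp, Matrix.toEuclideanLin_apply]

lemma inner_toOp_symm {H : Matrix (Fin d) (Fin d) ℝ} (hs : H.IsSymm) (x y : Vec d) :
    ⟪toOp H x, y⟫ = ⟪x, toOp H y⟫ := by
  have hh : H.IsHermitian := by
    ext i j
    simp only [Matrix.conjTranspose_apply, star_trivial]
    exact hs.apply i j
  exact (Matrix.isHermitian_iff_isSymmetric.mp hh) x y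

variable {μt Lt : ℝ} {H : Matrix (Fin d) (Fin d) ℝ}

lemma det_isUnit (hμt : 0 < μt)
    (hlb : ∀ v : Vec d, μt * ‖v‖ ^ 2 ≤ ⟪toOp H v, v⟫) : IsUnit H.det := by
  rw [isUnit_iff_ne_zero]
  intro hdet
  obtain ⟨v, hv0, hv⟩ := Matrix.exists_mulVec_eq_zero_iff.mpr hdet
  set x : Vec d := (WithLp.equiv 2 (Fin d → ℝ)).symm v with hxdef
  have hx : toOp H x = 0 := by
    simp [toOp, Matrix.toEuclideanLin_apply, hxdef, hv]
  have h1 := hlb x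
  rw [hx, inner_zero_left] at h1
  have hx0 : x ≠ 0 := by
    simpa [hxdef] using hv0
  have := norm_pos_iff.mpr hx0
  nlinarith [mul_pos hμt (pow_pos this 2)]

lemma cancel₁ (hd : IsUnit H.det) (x : Vec d) : toOp H (toOp H⁻¹ x) = x := by
  rw [← toOp_mul, Matrix.mul_nonsing_inv _ hd, toOp_one]

lemma cancel₂ (hd : IsUnit H.det) (x : Vec d) : toOp H⁻¹ (toOp H x) = x := by
  rw [← toOp_mul, Matrix.nonsing_inv_mul _ hd, toOp_one]

lemma quadA_symm (hs : H.IsSymm) (hd : IsUnit H.det) (x y : Vec d) :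
    ⟪toOp H⁻¹ x, y⟫ = ⟪x, toOp H⁻¹ y⟫ := by
  conv_lhs => rw [← cancel₁ hd y]
  rw [← inner_toOp_symm hs, cancel₁ hd]

lemma quadA_norm (hμt : 0 < μt) (hd : IsUnit H.det)
    (hlb : ∀ v : Vec d, μt * ‖v‖ ^ 2 ≤ ⟪toOp H v, v⟫) (u : Vec d) :
    μt * ‖toOp H⁻¹ u‖ ^ 2 ≤ ⟪toOp H⁻¹ u, u⟫ := by
  have := hlb (toOp H⁻¹ u)
  rw [cancel₁ hd] at this
  rwa [real_inner_comm u ((toOp H⁻¹) u)]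

lemma cs (hs : H.IsSymm) (hμt : 0 < μt)
    (hlb : ∀ v : Vec d, μt * ‖v‖ ^ 2 ≤ ⟪toOp H v, v⟫) (x y : Vec d) :
    ⟪toOp H x, y⟫ ^ 2 ≤ ⟪toOp H x, x⟫ * ⟪toOp H y, y⟫ := by
  have key : ∀ t : ℝ, 0 ≤ ⟪toOp H y, y⟫ * (t * t) + (2 * ⟪toOp H x, y⟫) * t + ⟪toOp H x, x⟫ := by
    intro t
    have h0 : (0:ℝ) ≤ ⟪toOp H (x + t • y), x + t • y⟫ := by
      have := hlb (x + t • y)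
      nlinarith [sq_nonneg ‖x + t • y‖]
    have hexp : ⟪toOp H (x + t • y), x + t • y⟫ =
        ⟪toOp H x, x⟫ + 2 * t * ⟪toOp H x, y⟫ + t * t * ⟪toOp H y, y⟫ := by
      simp only [map_add, _root_.map_smul, inner_add_left, inner_add_right,
        real_inner_smul_left, real_inner_smul_right]
      rw [inner_toOp_symm hs y x, real_inner_comm y (toOp H x)]
      ring
    rw [hexp] at h0
    linarith
  have := discrim_le_zero key
  rw [discrim] at this
  nlinarith

lemma normH_sq_le (hs : H.IsSymm) (hμt : 0 < μt) (hLt0 : 0 < Lt)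
    (hlb : ∀ v : Vec d, μt * ‖v‖ ^ 2 ≤ ⟪toOp H v, v⟫)
    (hub : ∀ v : Vec d, ⟪toOp H v, v⟫ ≤ Lt * ‖v‖ ^ 2) (z : Vec d) :
    ‖toOp H z‖ ^ 2 ≤ Lt * ⟪toOp H z, z⟫ := by
  have h1 := cs hs hμt hlb z (toOp H z)
  have h2 := hub (toOp H z)
  have hq : ⟪toOp H z, toOp H z⟫ = ‖toOp H z‖ ^ 2 := real_inner_self_eq_norm_sq _
  have hnn : 0 ≤ ⟪toOp H z, z⟫ := le_trans (by positivity) (hlb z)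
  rw [hq] at h1
  by_cases hz : ‖toOp H z‖ ^ 2 = 0
  · rw [hz]; exact mul_nonneg hLt0.le hnn
  · have hs0 : 0 < ‖toOp H z‖ ^ 2 := lt_of_le_of_ne (sq_nonneg _) (Ne.symm hz)
    nlinarith [mul_le_mul_of_nonneg_left h2 hnn]

lemma quadA_lb (hs : H.IsSymm) (hμt : 0 < μt) (hLt0 : 0 < Lt)
    (hlb : ∀ v : Vec d, μt * ‖v‖ ^ 2 ≤ ⟪toOp H v, v⟫)
    (hub : ∀ v : Vec d, ⟪toOp H v, v⟫ ≤ Lt * ‖v‖ ^ 2) (u : Vec d) :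
    ‖u‖ ^ 2 ≤ Lt * ⟪toOp H⁻¹ u, u⟫ := by
  have hd := det_isUnit hμt hlb
  have h := normH_sq_le hs hμt hLt0 hlb hub (toOp H⁻¹ u)
  rw [cancel₁ hd] at h
  rwa [real_inner_comm (toOp H⁻¹ u) u] at h

lemma quadA_nonneg (hs : H.IsSymm) (hμt : 0 < μt) (hLt0 : 0 < Lt)
    (hlb : ∀ v : Vec d, μt * ‖v‖ ^ 2 ≤ ⟪toOp H v, v⟫)
    (hub : ∀ v : Vec d, ⟪toOp H v, v⟫ ≤ Lt * ‖v‖ ^ 2) (u : Vec d) :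
    0 ≤ ⟪toOp H⁻¹ u, u⟫ := by
  have := quadA_lb hs hμt hLt0 hlb hub u
  nlinarith [sq_nonneg ‖u‖]

lemma quadA_ub (hμt : 0 < μt)
    (hlb : ∀ v : Vec d, μt * ‖v‖ ^ 2 ≤ ⟪toOp H v, v⟫) (u : Vec d) :
    μt * ⟪toOp H⁻¹ u, u⟫ ≤ ‖u‖ ^ 2 := by
  have hd := det_isUnit hμt hlb
  have b1 := quadA_norm hμt hd hlb u
  have b2 := real_inner_le_norm (toOp H⁻¹ u) u
  nlinarith [norm_nonneg (toOp H⁻¹ u), norm_nonneg u, sq_nonneg (‖toOp H⁻¹ u‖ * μt - ‖u‖)]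

lemma key_step (f : Vec d → ℝ) (gradf : Vec d → Vec d) (Hf : Vec d → (Vec d →L[ℝ] Vec d))
    (hgrad : ∀ x, HasGradientAt f (gradf x) x)
    (hHf : ∀ x, HasFDerivAt gradf (Hf x) x)
    (L α : ℝ) (hL : 0 < L) (hμt : 0 < μt) (hLt0 : 0 < Lt)
    (hα0 : 0 < α) (hα : α ≤ μt / L)
    (hub_f : ∀ z v, ⟪Hf z v, v⟫ ≤ L * ‖v‖ ^ 2)
    (hs : H.IsSymm)
    (hlb : ∀ v : Vec d, μt * ‖v‖ ^ 2 ≤ ⟪toOp H v, v⟫)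
    (hub : ∀ v : Vec d, ⟪toOp H v, v⟫ ≤ Lt * ‖v‖ ^ 2)
    (wk gk : Vec d) :
    f (wk - α • toOp H⁻¹ gk) ≤ f wk
      - α / 2 * ⟪toOp H⁻¹ (gradf wk), gradf wk⟫
      + α / 2 * ⟪toOp H⁻¹ (gk - gradf wk), gk - gradf wk⟫ := by
  have hd := det_isUnit hμt hlb
  set A := toOp H⁻¹ with hA
  set v := gradf wk with hvdef
  set e := gk - v with hedef
  have hg : gk = v + e := by rw [hedef]; abel
  have htay := taylor_ub f gradf Hf hgrad hHf L hub_f wk (wk - α • A gk)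
  have hyx : (wk - α • A gk) - wk = -(α • A gk) := by abel
  rw [hyx] at htay
  have hin : ⟪v, -(α • A gk)⟫ = -(α * ⟪A gk, v⟫) := by
    rw [inner_neg_right, real_inner_smul_right, real_inner_comm]
  have hnrm : ‖-(α • A gk)‖ ^ 2 = α ^ 2 * ‖A gk‖ ^ 2 := by
    rw [norm_neg, norm_smul, mul_pow, Real.norm_eq_abs, sq_abs]
  rw [hin, hnrm] at htay
  have hαL : α * L ≤ μt := (le_div_iff₀ hL).mp hα
  have b1 := quadA_norm hμt hd hlb gk
  have b2 := quadA_nonneg hs hμt hLt0 hlb hub gk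
  have hkey : L / 2 * (α ^ 2 * ‖A gk‖ ^ 2) ≤ α / 2 * ⟪A gk, gk⟫ := by
    nlinarith [mul_le_mul_of_nonneg_left b1 (le_of_lt (mul_pos (mul_pos hα0 hα0) hL)),
      mul_le_mul_of_nonneg_right hαL (mul_nonneg hα0.le b2), sq_nonneg ‖A gk‖,
      mul_nonneg (mul_nonneg hα0.le hα0.le) (sq_nonneg ‖A gk‖)]
  have symAe : ⟪A v, e⟫ = ⟪A e, v⟫ := by
    rw [quadA_symm hs hd v e, real_inner_comm]
  have eAg : ⟪A gk, gk⟫ = ⟪A v, v⟫ + 2 * ⟪A e, v⟫ + ⟪A e, e⟫ := by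
    rw [hg, map_add, inner_add_left, inner_add_right, inner_add_right, symAe]
    ring
  have eVg : ⟪A gk, v⟫ = ⟪A v, v⟫ + ⟪A e, v⟫ := by
    rw [hg, map_add, inner_add_left]
  rw [eAg] at hkey
  rw [eVg] at htay
  linarith



variable {d : ℕ}

lemma inner_toOp_eq (M : Matrix (Fin d) (Fin d) ℝ) (x y : Vec d) :
    ⟪toOp M x, y⟫ = ∑ i, (∑ j, M i j * x j) * y i := by
  simp [toOp, Matrix.toEuclideanLin_apply, PiLp.inner_apply, Matrix.mulVec,
    dotProduct, mul_comm]

variable {Ω : Type*} [MeasurableSpace Ω]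

lemma measurable_det {N : Ω → Matrix (Fin d) (Fin d) ℝ}
    (hN : ∀ i j, Measurable fun ω => N ω i j) : Measurable fun ω => (N ω).det := by
  simp_rw [Matrix.det_apply']
  exact Finset.measurable_sum _ fun σ _ =>
    (Finset.measurable_prod _ fun i _ => hN _ _).const_mul _

lemma measurable_entries {H : Ω → Matrix (Fin d) (Fin d) ℝ}
    (hH : Measurable fun ω => Matrix.of.symm (H ω)) (i j : Fin d) :
    Measurable fun ω => H ω i j :=
  (measurable_pi_apply j).comp ((measurable_pi_apply i).comp hH)

lemma measurable_inv_entries {H : Ω → Matrix (Fin d) (Fin d) ℝ}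
    (hH : Measurable fun ω => Matrix.of.symm (H ω)) (i j : Fin d) :
    Measurable fun ω => (H ω)⁻¹ i j := by
  simp_rw [Matrix.inv_def, Matrix.smul_apply, Ring.inverse_eq_inv, smul_eq_mul]
  apply Measurable.mul
  · exact (measurable_det (measurable_entries hH)).inv
  · simp_rw [Matrix.adjugate_apply]
    apply measurable_det
    intro a b
    simp_rw [Matrix.updateRow_apply]
    by_cases hab : a = j
    · simp [hab]
    · simpa [hab] using measurable_entries hH a b

lemma measurable_coord {u : Ω → Vec d} (hu : Measurable u) (i : Fin d) :
    Measurable fun ω => u ω i :=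
  ((PiLp.proj (𝕜 := ℝ) (p := 2) (β := fun _ : Fin d => ℝ) i).continuous.measurable).comp hu

lemma measurable_quad {H : Ω → Matrix (Fin d) (Fin d) ℝ}
    (hH : Measurable fun ω => Matrix.of.symm (H ω))
    {u : Ω → Vec d} (hu : Measurable u) :
    Measurable fun ω => ⟪toOp (H ω)⁻¹ (u ω), u ω⟫ := by
  simp_rw [inner_toOp_eq]
  exact Finset.measurable_sum _ fun i _ =>
    ((Finset.measurable_sum _ fun j _ =>
      (measurable_inv_entries hH i j).mul (measurable_coord hu j)).mul
      (measurable_coord hu i))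



variable {d : ℕ}

lemma taylor_lb (f : Vec d → ℝ) (gradf : Vec d → Vec d)
    (Hf : Vec d → (Vec d →L[ℝ] Vec d))
    (hgrad : ∀ x, HasGradientAt f (gradf x) x)
    (hHf : ∀ x, HasFDerivAt gradf (Hf x) x)
    (c : ℝ) (hc : ∀ z v, c * ‖v‖ ^ 2 ≤ ⟪Hf z v, v⟫)
    (x y : Vec d) : f x + ⟪gradf x, y - x⟫ + c / 2 * ‖y - x‖ ^ 2 ≤ f y := by
  have hg' : ∀ z, HasGradientAt (fun t => -f t) (-gradf z) z := by
    intro z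
    rw [hasGradientAt_iff_hasFDerivAt]
    have := (hgrad z).hasFDerivAt.neg
    simpa [map_neg, Pi.neg_def] using this
  have hH' : ∀ z, HasFDerivAt (fun t => -gradf t) (-(Hf z)) z := fun z => (hHf z).neg
  have hc' : ∀ z v, ⟪(-(Hf z)) v, v⟫ ≤ (-c) * ‖v‖ ^ 2 := by
    intro z v
    rw [ContinuousLinearMap.neg_apply, inner_neg_left]
    have := hc z v
    linarith
  have := taylor_ub (fun t => -f t) (fun t => -gradf t) (fun z => -(Hf z)) hg' hH'
    (-c) hc' x y
  rw [inner_neg_left] at this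
  linarith

lemma pl_lower (f : Vec d → ℝ) (gradf : Vec d → Vec d)
    (Hf : Vec d → (Vec d →L[ℝ] Vec d))
    (hgrad : ∀ x, HasGradientAt f (gradf x) x)
    (hHf : ∀ x, HasFDerivAt gradf (Hf x) x)
    (μ : ℝ) (hμ : 0 < μ) (hHlb : ∀ z v, μ * ‖v‖ ^ 2 ≤ ⟪Hf z v, v⟫)
    (wstar : Vec d) (x : Vec d) :
    2 * μ * (f x - f wstar) ≤ ‖gradf x‖ ^ 2 := by
  have hlow := taylor_lb f gradf Hf hgrad hHf μ hHlb x wstar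
  set u := wstar - x with hu
  set gx := gradf x with hgx
  have hsq : (0:ℝ) ≤ ‖u + μ⁻¹ • gx‖ ^ 2 := sq_nonneg _
  have hexp : ‖u + μ⁻¹ • gx‖ ^ 2 = ‖u‖ ^ 2 + 2 * (μ⁻¹ * ⟪u, gx⟫) + (μ⁻¹) ^ 2 * ‖gx‖ ^ 2 := by
    rw [norm_add_sq_real, real_inner_smul_right, norm_smul, Real.norm_eq_abs,
      abs_of_pos (inv_pos.mpr hμ), mul_pow]
  rw [hexp] at hsq
  have key : (0:ℝ) ≤ μ ^ 2 * ‖u‖ ^ 2 + 2 * μ * ⟪u, gx⟫ + ‖gx‖ ^ 2 := by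
    have h2 := mul_nonneg (mul_pos hμ hμ).le hsq
    have hiden : μ * μ * (‖u‖ ^ 2 + 2 * (μ⁻¹ * ⟪u, gx⟫) + (μ⁻¹) ^ 2 * ‖gx‖ ^ 2)
        = μ ^ 2 * ‖u‖ ^ 2 + 2 * μ * ⟪u, gx⟫ + ‖gx‖ ^ 2 := by
      field_simp
    rw [hiden] at h2
    exact h2
  rw [real_inner_comm u gx] at hlow
  nlinarith [mul_le_mul_of_nonneg_left hlow (by positivity : (0:ℝ) ≤ 2 * μ)]

lemma grad_sq_ub (f : Vec d → ℝ) (gradf : Vec d → Vec d)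
    (Hf : Vec d → (Vec d →L[ℝ] Vec d))
    (hgrad : ∀ x, HasGradientAt f (gradf x) x)
    (hHf : ∀ x, HasFDerivAt gradf (Hf x) x)
    (L : ℝ) (hL : 0 < L) (hHub : ∀ z v, ⟪Hf z v, v⟫ ≤ L * ‖v‖ ^ 2)
    (wstar : Vec d) (hmin : ∀ x, f wstar ≤ f x) (x : Vec d) :
    ‖gradf x‖ ^ 2 ≤ 2 * L * (f x - f wstar) := by
  have h := taylor_ub f gradf Hf hgrad hHf L hHub x (x - L⁻¹ • gradf x)
  have hyx : (x - L⁻¹ • gradf x) - x = -(L⁻¹ • gradf x) := by abel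
  rw [hyx, inner_neg_right, real_inner_smul_right, real_inner_self_eq_norm_sq,
    norm_neg, norm_smul, Real.norm_eq_abs, abs_of_pos (inv_pos.mpr hL)] at h
  have h2 := hmin (x - L⁻¹ • gradf x)
  have hiden : L / 2 * (L⁻¹ * ‖gradf x‖) ^ 2 = L⁻¹ / 2 * ‖gradf x‖ ^ 2 := by
    field_simp
  rw [hiden] at h
  -- h : f (x - L⁻¹ • gradf x) ≤ f x + -(L⁻¹ * ‖gradf x‖^2) + L⁻¹/2 * ‖gradf x‖^2
  have h3 : L⁻¹ / 2 * ‖gradf x‖ ^ 2 ≤ f x - f wstar := by linarith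
  have h4 := mul_le_mul_of_nonneg_left h3 (by positivity : (0:ℝ) ≤ 2 * L)
  have hiden2 : 2 * L * (L⁻¹ / 2 * ‖gradf x‖ ^ 2) = ‖gradf x‖ ^ 2 := by
    field_simp
  rw [hiden2] at h4
  exact h4


end Aux

open Aux

/-- Global linear convergence in expectation under the stochastic
norm condition with `A_k = H̃_k⁻¹`, for strongly convex objectives. -/
theorem global_linear_convergence_in_expectation {d : ℕ}
    {Ω : Type*} [m0 : MeasurableSpace Ω] (μP : Measure Ω) [IsProbabilityMeasure μP]
    (L μ μt Lt α θg a_g ι₀ : ℝ)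
    (hL : 0 < L) (hμ : 0 < μ) (hμL : μ ≤ L) (hμt : 0 < μt) (hLt : L ≤ Lt)
    (f : Vec d → ℝ) (gradf : Vec d → Vec d) (Hf : Vec d → (Vec d →L[ℝ] Vec d))
    (hsmooth : ContDiff ℝ 2 f)
    (hgrad : ∀ x, HasGradientAt f (gradf x) x)
    (hHf : ∀ x, HasFDerivAt gradf (Hf x) x)
    (hHub : ∀ x (v : Vec d), ⟪Hf x v, v⟫ ≤ L * ‖v‖ ^ 2)
    (hHlb : ∀ x (v : Vec d), μ * ‖v‖ ^ 2 ≤ ⟪Hf x v, v⟫)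
    (wstar : Vec d) (hmin : ∀ x, f wstar ≤ f x)
    (huniq : ∀ x, (∀ y, f x ≤ f y) → x = wstar)
    (w g : ℕ → Ω → Vec d) (Ht : ℕ → Ω → Matrix (Fin d) (Fin d) ℝ)
    (hwmeas : ∀ k, Measurable (w k)) (hgmeas : ∀ k, Measurable (g k))
    (hHtmeas : ∀ k, Measurable fun ω => Matrix.of.symm (Ht k ω))
    (hHtspec : ∀ k, ∀ᵐ ω ∂μP, (Ht k ω).IsSymm ∧
      (∀ v : Vec d, μt * ‖v‖ ^ 2 ≤ ⟪toOp (Ht k ω) v, v⟫) ∧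
      (∀ v : Vec d, ⟪toOp (Ht k ω) v, v⟫ ≤ Lt * ‖v‖ ^ 2))
    (w0 : Vec d) (hw0 : ∀ ω, w 0 ω = w0)
    (hα0 : 0 < α) (hα : α ≤ μt / L)
    (hiter : ∀ k ω, w (k + 1) ω = w k ω - α • toOp (Ht k ω)⁻¹ (g k ω))
    (hθg : θg ∈ Set.Ico (0 : ℝ) 1) (hι₀ : 0 < ι₀) (hag : a_g ∈ Set.Ico (0 : ℝ) 1)
    (hfint : ∀ k, Integrable (fun ω => f (w k ω)) μP)
    (hqint : ∀ k, Integrable (fun ω =>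
      ⟪toOp (Ht k ω)⁻¹ (g k ω - gradf (w k ω)), g k ω - gradf (w k ω)⟫) μP)
    (hnorm : ∀ k,
      μP[(fun ω => ⟪toOp (Ht k ω)⁻¹ (g k ω - gradf (w k ω)),
            g k ω - gradf (w k ω)⟫) |
          MeasurableSpace.comap (fun ω => (w k ω, Matrix.of.symm (Ht k ω)))
            inferInstance]
        ≤ᵐ[μP] fun ω =>
          θg ^ 2 * ⟪toOp (Ht k ω)⁻¹ (gradf (w k ω)), gradf (w k ω)⟫ + ι₀ * a_g ^ k) :
    ∀ k, ∫ ω, (f (w k ω) - f wstar) ∂μP ≤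
      max (f w0 - f wstar) (Lt * ι₀ / (μ * (1 - θg ^ 2))) *
        (max (1 - α * μ * (1 - θg ^ 2) / (2 * Lt)) a_g) ^ k := by
  have hθ1 : θg ^ 2 < 1 := by nlinarith [hθg.1, hθg.2]
  have hθp : 0 < 1 - θg ^ 2 := by linarith
  have hLt0 : 0 < Lt := lt_of_lt_of_le hL hLt
  have hC2 : 0 < Lt * ι₀ / (μ * (1 - θg ^ 2)) :=
    div_pos (mul_pos hLt0 hι₀) (mul_pos hμ hθp)
  set C := max (f w0 - f wstar) (Lt * ι₀ / (μ * (1 - θg ^ 2))) with hCdef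
  set ρ := max (1 - α * μ * (1 - θg ^ 2) / (2 * Lt)) a_g with hρdef
  have hρ0 : 0 ≤ ρ := le_trans hag.1 (le_max_right _ _)
  have hC0 : 0 < C := lt_of_lt_of_le hC2 (le_max_right _ _)
  rcases Nat.eq_zero_or_pos d with hd | hd
  · subst hd
    haveI : Subsingleton (Vec 0) := ⟨fun a b => by ext i; exact i.elim0⟩
    intro k
    have hz : ∀ ω, f (w k ω) - f wstar = 0 := fun ω => by
      rw [Subsingleton.elim (w k ω) wstar]; ring
    simp only [hz, integral_zero]
    exact mul_nonneg hC0.le (pow_nonneg hρ0 k)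
  -- main case
  have hμtLt : μt ≤ Lt := by
    obtain ⟨ω₀, hsym₀, hlb₀, hub₀⟩ := (hHtspec 0).exists
    set v0 : Vec d := EuclideanSpace.single ⟨0, hd⟩ (1:ℝ) with hv0def
    have hv0 : ‖v0‖ = 1 := by simp [hv0def, EuclideanSpace.norm_single]
    have := le_trans (hlb₀ v0) (hub₀ v0)
    rw [hv0] at this
    simpa using this
  have hgc : Continuous gradf := Differentiable.continuous fun x => (hHf x).differentiableAt
  have hFnn : ∀ n, 0 ≤ ∫ ω, (f (w n ω) - f wstar) ∂μP :=
    fun n => integral_nonneg fun ω => sub_nonneg.mpr (hmin _)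
  have hGint : ∀ n, Integrable (fun ω => f (w n ω) - f wstar) μP :=
    fun n => (hfint n).sub (integrable_const _)
  have hQint : ∀ n, Integrable
      (fun ω => ⟪toOp (Ht n ω)⁻¹ (gradf (w n ω)), gradf (w n ω)⟫) μP := by
    intro n
    have hqmeas : Measurable
        (fun ω => ⟪toOp (Ht n ω)⁻¹ (gradf (w n ω)), gradf (w n ω)⟫) :=
      measurable_quad (hHtmeas n) (hgc.measurable.comp (hwmeas n))
    apply Integrable.mono' (g := fun ω => 2 * L / μt * (f (w n ω) - f wstar))
      ((hGint n).const_mul _) hqmeas.aestronglyMeasurable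
    filter_upwards [hHtspec n] with ω hω
    obtain ⟨hsym, hlbω, hubω⟩ := hω
    have h1 := quadA_nonneg hsym hμt hLt0 hlbω hubω (gradf (w n ω))
    have h2 := quadA_ub hμt hlbω (gradf (w n ω))
    have h3 := grad_sq_ub f gradf Hf hgrad hHf L hL hHub wstar hmin (w n ω)
    rw [Real.norm_eq_abs, abs_of_nonneg h1]
    have h4 : μt * ⟪toOp (Ht n ω)⁻¹ (gradf (w n ω)), gradf (w n ω)⟫
        ≤ 2 * L * (f (w n ω) - f wstar) := le_trans h2 h3
    calc ⟪toOp (Ht n ω)⁻¹ (gradf (w n ω)), gradf (w n ω)⟫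
        = μt⁻¹ * (μt * ⟪toOp (Ht n ω)⁻¹ (gradf (w n ω)), gradf (w n ω)⟫) := by
          field_simp
      _ ≤ μt⁻¹ * (2 * L * (f (w n ω) - f wstar)) :=
          mul_le_mul_of_nonneg_left h4 (by positivity)
      _ = 2 * L / μt * (f (w n ω) - f wstar) := by ring
  -- the one-step recursion
  have hrec : ∀ n, ∫ ω, (f (w (n+1) ω) - f wstar) ∂μP ≤
      (1 - 2 * (α * μ * (1 - θg ^ 2) / (2 * Lt))) * ∫ ω, (f (w n ω) - f wstar) ∂μP
        + α / 2 * ι₀ * a_g ^ n := by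
    intro n
    set q := fun ω => ⟪toOp (Ht n ω)⁻¹ (gradf (w n ω)), gradf (w n ω)⟫ with hqdef
    set e := fun ω => ⟪toOp (Ht n ω)⁻¹ (g n ω - gradf (w n ω)),
      g n ω - gradf (w n ω)⟫ with hedef
    -- pointwise descent
    have hae : ∀ᵐ ω ∂μP, f (w (n+1) ω) - f wstar ≤
        ((f (w n ω) - f wstar) - α / 2 * q ω) + α / 2 * e ω := by
      filter_upwards [hHtspec n] with ω hω
      obtain ⟨hsym, hlbω, hubω⟩ := hω
      have := key_step f gradf Hf hgrad hHf L α hL hμt hLt0 hα0 hα hHub hsym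
        hlbω hubω (w n ω) (g n ω)
      rw [hiter n ω]
      simp only [hqdef, hedef]
      linarith
    have hint1 : Integrable (fun ω => (f (w n ω) - f wstar) - α / 2 * q ω) μP :=
      (hGint n).sub ((hQint n).const_mul (α/2))
    have hint2 : Integrable (fun ω => α / 2 * e ω) μP := (hqint n).const_mul (α/2)
    have hstep : ∫ ω, (f (w (n+1) ω) - f wstar) ∂μP ≤
        ∫ ω, ((f (w n ω) - f wstar) - α / 2 * q ω + α / 2 * e ω) ∂μP :=
      integral_mono_ae (hGint (n+1)) (hint1.add hint2) hae
    rw [integral_add hint1 hint2, integral_sub (hGint n) ((hQint n).const_mul (α/2)),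
      integral_const_mul, integral_const_mul] at hstep
    -- conditional expectation bound
    have hm : MeasurableSpace.comap
        (fun ω => (w n ω, Matrix.of.symm (Ht n ω))) inferInstance ≤ m0 :=
      ((hwmeas n).prodMk (hHtmeas n)).comap_le
    have hint3 : Integrable (fun ω => θg ^ 2 * q ω + ι₀ * a_g ^ n) μP :=
      ((hQint n).const_mul (θg ^ 2)).add (integrable_const _)
    have hcond : ∫ ω, e ω ∂μP ≤ ∫ ω, (θg ^ 2 * q ω + ι₀ * a_g ^ n) ∂μP := by
      have h0 := integral_mono_ae integrable_condExp hint3 (hnorm n)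
      rwa [integral_condExp hm] at h0
    rw [integral_add ((hQint n).const_mul (θg ^ 2)) (integrable_const _),
      integral_const_mul, integral_const] at hcond
    simp only [measure_univ, probReal_univ, smul_eq_mul, one_mul, one_smul] at hcond
    -- Q lower bound
    have hQlb : 2 * μ * ∫ ω, (f (w n ω) - f wstar) ∂μP ≤ Lt * ∫ ω, q ω ∂μP := by
      have hq : ∫ ω, (2 * μ * (f (w n ω) - f wstar)) ∂μP ≤ ∫ ω, (Lt * q ω) ∂μP := by
        apply integral_mono_ae ((hGint n).const_mul (2 * μ)) ((hQint n).const_mul Lt)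
        filter_upwards [hHtspec n] with ω hω
        obtain ⟨hsym, hlbω, hubω⟩ := hω
        have h1 := pl_lower f gradf Hf hgrad hHf μ hμ hHlb wstar (w n ω)
        have h2 := quadA_lb hsym hμt hLt0 hlbω hubω (gradf (w n ω))
        show 2 * μ * (f (w n ω) - f wstar) ≤
          Lt * ⟪toOp (Ht n ω)⁻¹ (gradf (w n ω)), gradf (w n ω)⟫
        linarith
      rwa [integral_const_mul, integral_const_mul] at hq
    -- combine
    have hQLt : α * μ * (1 - θg ^ 2) / Lt * ∫ ω, (f (w n ω) - f wstar) ∂μP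
        ≤ α / 2 * (1 - θg ^ 2) * ∫ ω, q ω ∂μP := by
      have hco : (0:ℝ) ≤ α / 2 * (1 - θg ^ 2) / Lt := by positivity
      have := mul_le_mul_of_nonneg_left hQlb hco
      calc α * μ * (1 - θg ^ 2) / Lt * ∫ ω, (f (w n ω) - f wstar) ∂μP
          = α / 2 * (1 - θg ^ 2) / Lt * (2 * μ * ∫ ω, (f (w n ω) - f wstar) ∂μP) := by
            ring
        _ ≤ α / 2 * (1 - θg ^ 2) / Lt * (Lt * ∫ ω, q ω ∂μP) :=
            mul_le_mul_of_nonneg_left hQlb hco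
        _ = α / 2 * (1 - θg ^ 2) * ∫ ω, q ω ∂μP := by
            field_simp
    have heq : (1 - 2 * (α * μ * (1 - θg ^ 2) / (2 * Lt)))
        = 1 - α * μ * (1 - θg ^ 2) / Lt := by ring
    rw [heq]
    have hαθ : (0:ℝ) ≤ α / 2 := by positivity
    nlinarith [mul_le_mul_of_nonneg_left hcond hαθ]
  -- numeric facts for induction
  have hαL : α * L ≤ μt := (le_div_iff₀ hL).mp hα
  have hδdef : 0 < α * μ * (1 - θg ^ 2) / (2 * Lt) := by positivity
  have hδhalf : 2 * (α * μ * (1 - θg ^ 2) / (2 * Lt)) ≤ 1 := by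
    have h1 : α * μ ≤ α * L := mul_le_mul_of_nonneg_left hμL hα0.le
    have h2 : α * μ * (1 - θg ^ 2) ≤ Lt := by
      nlinarith [mul_nonneg (mul_pos hα0 hμ).le (sq_nonneg θg)]
    have heq2 : 2 * (α * μ * (1 - θg ^ 2) / (2 * Lt)) = α * μ * (1 - θg ^ 2) / Lt := by
      ring
    rw [heq2, div_le_one hLt0]
    exact h2
  have hCδ : α / 2 * ι₀ ≤ α * μ * (1 - θg ^ 2) / (2 * Lt) * C := by
    have he : α / 2 * ι₀ = α * μ * (1 - θg ^ 2) / (2 * Lt)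
        * (Lt * ι₀ / (μ * (1 - θg ^ 2))) := by
      field_simp
    rw [he]
    exact mul_le_mul_of_nonneg_left (le_max_right _ _) hδdef.le
  have hρ1 : 1 - α * μ * (1 - θg ^ 2) / (2 * Lt) ≤ ρ := le_max_left _ _
  have haρ : a_g ≤ ρ := le_max_right _ _
  -- induction
  intro k
  induction k with
  | zero =>
    simp only [hw0, pow_zero, mul_one]
    rw [integral_const]
    simp only [measure_univ, probReal_univ, one_smul]
    exact le_max_left _ _
  | succ n ih =>
    have h1 := hrec n
    have hpow : a_g ^ n ≤ ρ ^ n := pow_le_pow_left₀ hag.1 haρ n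
    have hρn : (0:ℝ) ≤ ρ ^ n := pow_nonneg hρ0 n
    have hρs : ρ ^ (n+1) = ρ * ρ ^ n := pow_succ' ρ n
    set δ := α * μ * (1 - θg ^ 2) / (2 * Lt) with hδ
    calc ∫ ω, (f (w (n+1) ω) - f wstar) ∂μP
        ≤ (1 - 2 * δ) * ∫ ω, (f (w n ω) - f wstar) ∂μP + α / 2 * ι₀ * a_g ^ n := h1
      _ ≤ (1 - 2 * δ) * (C * ρ ^ n) + α / 2 * ι₀ * a_g ^ n := by
          have := mul_le_mul_of_nonneg_left ih (by linarith : (0:ℝ) ≤ 1 - 2 * δ)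
          linarith
      _ ≤ (1 - 2 * δ) * (C * ρ ^ n) + δ * C * ρ ^ n := by
          have h2 : α / 2 * ι₀ * a_g ^ n ≤ α / 2 * ι₀ * ρ ^ n :=
            mul_le_mul_of_nonneg_left hpow (by positivity)
          have h3 : α / 2 * ι₀ * ρ ^ n ≤ δ * C * ρ ^ n :=
            mul_le_mul_of_nonneg_right hCδ hρn
          linarith
      _ = (1 - δ) * (C * ρ ^ n) := by ring
      _ ≤ ρ * (C * ρ ^ n) :=
          mul_le_mul_of_nonneg_right hρ1 (mul_nonneg hC0.le hρn)
      _ = C * ρ ^ (n+1) := by rw [hρs]; ring
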